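/- Let K, t, ε, n_s, α, L be positive real numbers with ε ≤ 1 and let Δ ≥ 0. Define, for λ ∈ [0,1], V(λ) = 2·√((λ²·K·t/ε + (1−λ)²·n_s)·L) + (λ·K/ε + (1−λ))·L and G(λ) = ((1−λ)·n_s·Δ + 2·V(λ)) / (λ·t + (1−λ)·n_s·α). Then min(G(0), G(1)) ≤ √2 · G(λ) for every λ ∈ [0,1]; in particular, min over λ ∈ {0,1} of G(λ) ≤ √2 times the infimum over λ ∈ [0,1] of G(λ). -/
import Mathlib


/-- The deviation bound `V(λ)` in the warm-start contextual bandit analysis. -/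
noncomputable def Vfun (K t ε ns L lam : ℝ) : ℝ :=
  2 * Real.sqrt ((lam ^ 2 * K * t / ε + (1 - lam) ^ 2 * ns) * L) +
    (lam * K / ε + (1 - lam)) * L

/-- The per-round excess-cost bound `G(λ)`. -/
noncomputable def Gfun (K t ε ns α Δ L lam : ℝ) : ℝ :=
  ((1 - lam) * ns * Δ + 2 * Vfun K t ε ns L lam) / (lam * t + (1 - lam) * ns * α)

lemma sqrt_aux (x y : ℝ) (hx : 0 ≤ x) (hy : 0 ≤ y) :
    x + y ≤ Real.sqrt 2 * Real.sqrt (x ^ 2 + y ^ 2) := by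
  have h := Real.sqrt_le_sqrt (show (x + y) ^ 2 ≤ 2 * (x ^ 2 + y ^ 2) by nlinarith [sq_nonneg (x - y)])
  rw [Real.sqrt_sq (by positivity), Real.sqrt_mul (by norm_num)] at h
  exact h

/-- Approximate optimality of `Λ = {0,1}`: the better of `G(0)` and `G(1)` is within a
factor `√2` of `G(λ)` for every `λ ∈ [0,1]`, and hence within `√2` of the infimum of `G`
over `[0,1]`. -/
theorem min_G_zero_one_le (K t ε ns α L Δ : ℝ) (hK : 0 < K) (ht : 0 < t) (hε : 0 < ε)
    (hε1 : ε ≤ 1) (hns : 0 < ns) (hα : 0 < α) (hL : 0 < L) (hΔ : 0 ≤ Δ) :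
    (∀ lam ∈ Set.Icc (0:ℝ) 1,
        min (Gfun K t ε ns α Δ L 0) (Gfun K t ε ns α Δ L 1) ≤
          Real.sqrt 2 * Gfun K t ε ns α Δ L lam) ∧
      min (Gfun K t ε ns α Δ L 0) (Gfun K t ε ns α Δ L 1) ≤
        Real.sqrt 2 * ⨅ lam : Set.Icc (0:ℝ) 1, Gfun K t ε ns α Δ L lam := by
  have h2 : (0:ℝ) < Real.sqrt 2 := Real.sqrt_pos.2 (by norm_num)
  have h12 : (1:ℝ) ≤ Real.sqrt 2 := by
    rw [show (1:ℝ) = Real.sqrt 1 by simp]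
    exact Real.sqrt_le_sqrt (by norm_num)
  set s1 : ℝ := Real.sqrt (K * t / ε * L) with hs1
  set s0 : ℝ := Real.sqrt (ns * L) with hs0
  have hs1sq : s1 ^ 2 = K * t / ε * L := Real.sq_sqrt (by positivity)
  have hs0sq : s0 ^ 2 = ns * L := Real.sq_sqrt (by positivity)
  have hs1n : 0 ≤ s1 := Real.sqrt_nonneg _
  have hs0n : 0 ≤ s0 := Real.sqrt_nonneg _
  -- N and D components at 0 and 1
  have hV1 : Vfun K t ε ns L 1 = 2 * s1 + K / ε * L := by
    unfold Vfun
    rw [show (1 ^ 2 * K * t / ε + (1 - 1) ^ 2 * ns) * L = K * t / ε * L by ring]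
    ring
  have hV0 : Vfun K t ε ns L 0 = 2 * s0 + L := by
    unfold Vfun
    rw [show ((0:ℝ) ^ 2 * K * t / ε + (1 - 0) ^ 2 * ns) * L = ns * L by ring]
    ring
  have hG1 : Gfun K t ε ns α Δ L 1 = (4 * s1 + 2 * (K / ε * L)) / t := by
    unfold Gfun; rw [hV1]; ring_nf
  have hG0 : Gfun K t ε ns α Δ L 0 = (ns * Δ + 4 * s0 + 2 * L) / (ns * α) := by
    unfold Gfun; rw [hV0]; ring_nf
  have key : ∀ lam ∈ Set.Icc (0:ℝ) 1,
      min (Gfun K t ε ns α Δ L 0) (Gfun K t ε ns α Δ L 1) ≤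
        Real.sqrt 2 * Gfun K t ε ns α Δ L lam := by
    intro lam hlam
    obtain ⟨hl0, hl1⟩ := hlam
    have hl1' : 0 ≤ 1 - lam := by linarith
    have hD : 0 < lam * t + (1 - lam) * ns * α := by
      rcases hl0.lt_or_eq with h | h
      · have a := mul_pos h ht
        have b : 0 ≤ (1 - lam) * ns * α := by positivity
        linarith
      · rw [← h]
        have : 0 < 1 * ns * α := by positivity
        linarith [this]
    set m := min (Gfun K t ε ns α Δ L 0) (Gfun K t ε ns α Δ L 1) with hm
    -- m * D1 ≤ N1 and m * D0 ≤ N0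
    have hmt : m * t ≤ 4 * s1 + 2 * (K / ε * L) := by
      have h : m ≤ (4 * s1 + 2 * (K / ε * L)) / t :=
        le_trans (min_le_right _ _) (le_of_eq hG1)
      exact (le_div_iff₀ ht).mp h
    have hmns : m * (ns * α) ≤ ns * Δ + 4 * s0 + 2 * L := by
      have h : m ≤ (ns * Δ + 4 * s0 + 2 * L) / (ns * α) :=
        le_trans (min_le_left _ _) (le_of_eq hG0)
      exact (le_div_iff₀ (by positivity)).mp h
    -- convex combination bound on numerator
    have harg : (lam ^ 2 * K * t / ε + (1 - lam) ^ 2 * ns) * L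
        = (lam * s1) ^ 2 + ((1 - lam) * s0) ^ 2 := by
      rw [mul_pow, mul_pow, hs1sq, hs0sq]; ring
    have hS : lam * s1 + (1 - lam) * s0 ≤
        Real.sqrt 2 * Real.sqrt ((lam ^ 2 * K * t / ε + (1 - lam) ^ 2 * ns) * L) := by
      rw [harg]
      exact sqrt_aux _ _ (by positivity) (by positivity)
    set S : ℝ := Real.sqrt ((lam ^ 2 * K * t / ε + (1 - lam) ^ 2 * ns) * L) with hSdef
    have hA : (1 - lam) * ns * Δ ≤ Real.sqrt 2 * ((1 - lam) * ns * Δ) :=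
      le_mul_of_one_le_left (by positivity) h12
    have hB : (lam * K / ε + (1 - lam)) * L ≤ Real.sqrt 2 * ((lam * K / ε + (1 - lam)) * L) :=
      le_mul_of_one_le_left (by positivity) h12
    have hNum : lam * (4 * s1 + 2 * (K / ε * L)) + (1 - lam) * (ns * Δ + 4 * s0 + 2 * L)
        ≤ Real.sqrt 2 * ((1 - lam) * ns * Δ + 2 * Vfun K t ε ns L lam) := by
      have hV : Vfun K t ε ns L lam = 2 * S + (lam * K / ε + (1 - lam)) * L := rfl
      rw [hV]
      have h4 : 4 * (lam * s1 + (1 - lam) * s0) ≤ 4 * (Real.sqrt 2 * S) := by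
        linarith [hS]
      have e1 : lam * (4 * s1 + 2 * (K / ε * L)) + (1 - lam) * (ns * Δ + 4 * s0 + 2 * L)
          = (1 - lam) * ns * Δ + 4 * (lam * s1 + (1 - lam) * s0)
            + 2 * ((lam * K / ε + (1 - lam)) * L) := by ring
      have e2 : Real.sqrt 2 * ((1 - lam) * ns * Δ + 2 * (2 * S + (lam * K / ε + (1 - lam)) * L))
          = Real.sqrt 2 * ((1 - lam) * ns * Δ) + 4 * (Real.sqrt 2 * S)
            + 2 * (Real.sqrt 2 * ((lam * K / ε + (1 - lam)) * L)) := by ring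
      rw [e1, e2]
      linarith [hA, hB, h4]
    -- combine
    have hmD : m * (lam * t + (1 - lam) * ns * α)
        ≤ Real.sqrt 2 * ((1 - lam) * ns * Δ + 2 * Vfun K t ε ns L lam) := by
      have hmt' := mul_le_mul_of_nonneg_left hmt hl0
      have hmns' := mul_le_mul_of_nonneg_left hmns hl1'
      calc m * (lam * t + (1 - lam) * ns * α)
          = lam * (m * t) + (1 - lam) * (m * (ns * α)) := by ring
        _ ≤ lam * (4 * s1 + 2 * (K / ε * L)) + (1 - lam) * (ns * Δ + 4 * s0 + 2 * L) :=
            add_le_add hmt' hmns'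
        _ ≤ _ := hNum
    have := (le_div_iff₀ hD).mpr hmD
    calc m ≤ Real.sqrt 2 * ((1 - lam) * ns * Δ + 2 * Vfun K t ε ns L lam) /
        (lam * t + (1 - lam) * ns * α) := this
      _ = Real.sqrt 2 * Gfun K t ε ns α Δ L lam := by unfold Gfun; ring
  refine ⟨key, ?_⟩
  have hne : Nonempty (Set.Icc (0:ℝ) 1) := ⟨⟨0, by norm_num⟩⟩
  have hinf : min (Gfun K t ε ns α Δ L 0) (Gfun K t ε ns α Δ L 1) / Real.sqrt 2 ≤
      ⨅ lam : Set.Icc (0:ℝ) 1, Gfun K t ε ns α Δ L lam := by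
    apply le_ciInf
    intro x
    have := key x x.2
    rw [div_le_iff₀ h2]
    linarith
  have := (div_le_iff₀ h2).mp hinf
  linarith [this]
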